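/- Let q = 2^ℓ with ℓ ≥ 1, and let Γ be the q × q matrix over F_{q^2} whose (z, w) entry (0-indexed, 0 ≤ z, w ≤ q−1) is P_{wq+z}, where P_k = Σ_{i=0}^q σ_i^k for the roots σ_i of p(t) = t^{q+1} + α^q t^q + α t + γ. Then Γ equals the Kronecker product M_{ℓ−1} ⊗ M_{ℓ−2} ⊗ ⋯ ⊗ M_0, where M_i is the 2×2 matrix [[1, α^{2^i}], [α^{q·2^i}, γ^{2^i}]]. -/
import Mathlib
open Finset Polynomial

lemma aux_sum_bits : ∀ ℓ z : ℕ, z < 2^ℓ → ∑ i ∈ Finset.range ℓ, (z / 2^i % 2) * 2^i = z := by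
  intro ℓ
  induction ℓ with
  | zero => intro z hz; interval_cases z; simp
  | succ n ih =>
    intro z hz
    rw [Finset.sum_range_succ']
    have h1 : ∀ i : ℕ, z / 2^(i+1) = (z/2) / 2^i := by
      intro i
      rw [Nat.div_div_eq_div_mul, pow_succ']
    have h2 : ∑ i ∈ Finset.range n, (z / 2^(i+1) % 2) * 2^(i+1)
        = 2 * ∑ i ∈ Finset.range n, ((z/2) / 2^i % 2) * 2^i := by
      rw [Finset.mul_sum]
      refine Finset.sum_congr rfl fun i _ => ?_
      rw [h1, pow_succ]; ring
    have h3 : z / 2 < 2^n := by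
      rw [Nat.div_lt_iff_lt_mul (by norm_num)]
      calc z < 2^(n+1) := hz
        _ = 2^n * 2 := by rw [pow_succ]
    rw [h2, ih _ h3]
    simp only [pow_zero, Nat.div_one, mul_one]
    omega


lemma aux_full {F : Type*} [Field F] [Fintype F] [DecidableEq F] {q : ℕ} (hq1 : 1 ≤ q)
    (δ : F) (Rt : Finset F) (hcard : Rt.card = q+1) (hmem : ∀ x ∈ Rt, x^(q+1) = δ) :
    ∀ x : F, x^(q+1) = δ → x ∈ Rt := by
  have hsub : Rt ⊆ Finset.univ.filter (fun x => x^(q+1) = δ) := fun x hx => by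
    simp [hmem x hx]
  have hcl : (Finset.univ.filter (fun x : F => x^(q+1) = δ)).card ≤ q+1 := by
    have hmono : Finset.univ.filter (fun x : F => x^(q+1) = δ)
        ⊆ (X^(q+1) - C δ : F[X]).roots.toFinset := by
      intro x hx
      simp only [Finset.mem_filter] at hx
      rw [Multiset.mem_toFinset, Polynomial.mem_roots
        (Polynomial.X_pow_sub_C_ne_zero (by omega) δ), Polynomial.IsRoot.def]
      simp [hx.2]
    calc (Finset.univ.filter (fun x : F => x^(q+1) = δ)).card
        ≤ (X^(q+1) - C δ : F[X]).roots.toFinset.card := Finset.card_le_card hmono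
      _ ≤ Multiset.card (X^(q+1) - C δ : F[X]).roots := Multiset.toFinset_card_le _
      _ ≤ (X^(q+1) - C δ : F[X]).natDegree := Polynomial.card_roots' _
      _ = q+1 := Polynomial.natDegree_X_pow_sub_C
  have heq := Finset.eq_of_subset_of_card_le hsub (by rw [hcard]; exact hcl)
  intro x hx
  rw [heq]
  simp [hx]

lemma aux_sum_zero {F : Type*} [Field F] [Fintype F] [DecidableEq F] {q : ℕ} (hq2 : 2 ≤ q)
    (hF : Fintype.card F = q^2) (δ : F) (Rt : Finset F)
    (hmem : ∀ x ∈ Rt, x^(q+1) = δ) (hfull : ∀ x : F, x^(q+1) = δ → x ∈ Rt)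
    {d : ℕ} (hd0 : 0 < d) (hdq : d < q+1) :
    ∑ x ∈ Rt, x^d = 0 := by
  obtain ⟨g, hg⟩ := IsCyclic.exists_generator (α := Fˣ)
  have hor : orderOf g = q^2 - 1 := by
    rw [orderOf_eq_card_of_forall_mem_zpowers hg, Nat.card_eq_fintype_card,
      Fintype.card_units, hF]
  have hζor : orderOf (g^(q-1)) = q+1 := by
    rw [orderOf_pow, hor]
    have h1 : (q^2 - 1) = (q-1) * (q+1) := by
      obtain ⟨k, rfl⟩ : ∃ k, q = k + 1 := ⟨q - 1, by omega⟩
      have e1 : (k+1)^2 = k*k + 2*k + 1 := by ring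
      have e2 : (k+1-1) * (k+1+1) = k*k + 2*k := by simp; ring
      omega
    have h2 : Nat.gcd (q^2-1) (q-1) = q - 1 :=
      Nat.gcd_eq_right ⟨q+1, by omega⟩
    rw [h2, h1, Nat.mul_div_cancel_left _ (by omega)]
  set ζ : F := ((g^(q-1) : Fˣ) : F) with hζdef
  have hζ1 : ζ^(q+1) = 1 := by
    rw [hζdef, ← Units.val_pow_eq_pow_val, ← hζor, pow_orderOf_eq_one, Units.val_one]
  have hζd : ζ^d ≠ 1 := by
    intro h
    have h1 : (g^(q-1))^d = 1 := by
      ext; rw [Units.val_pow_eq_pow_val]; exact h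
    have h2 := orderOf_dvd_of_pow_eq_one h1
    rw [hζor] at h2
    exact absurd (Nat.le_of_dvd hd0 h2) (by omega)
  have hζ0 : ζ ≠ 0 := Units.ne_zero _
  have himg : Rt.image (fun x => ζ * x) = Rt := by
    apply Finset.eq_of_subset_of_card_le
    · intro y hy
      simp only [Finset.mem_image] at hy
      obtain ⟨x, hx, rfl⟩ := hy
      exact hfull _ (by rw [mul_pow, hmem x hx, hζ1, one_mul])
    · rw [Finset.card_image_of_injective _ (mul_right_injective₀ hζ0)]
  have hre : ∑ x ∈ Rt, x^d = ζ^d * ∑ x ∈ Rt, x^d := by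
    conv_lhs => rw [← himg]
    rw [Finset.sum_image (fun x _ y _ h => mul_right_injective₀ hζ0 h), Finset.mul_sum]
    exact Finset.sum_congr rfl fun x _ => by rw [mul_pow]
  have h0 : (ζ^d - 1) * ∑ x ∈ Rt, x^d = 0 := by
    rw [sub_mul, one_mul, ← hre, sub_self]
  rcases mul_eq_zero.1 h0 with h | h
  · exact absurd (by linear_combination h : ζ^d = 1) hζd
  · exact h

set_option maxHeartbeats 2000000 in
/-- The `q × q` matrix of power sums `P_{wq+z}` of the roots of
`p(t) = t^(q+1) + α^q t^q + α t + γ` equals the iterated Kronecker product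
`M_{ℓ-1} ⊗ ⋯ ⊗ M_0` where `M_i = [[1, α^(2^i)], [α^(q·2^i), γ^(2^i)]]`; entrywise, the
`(z,w)` entry of this Kronecker product is the product over `i < ℓ` of the entry of `M_i` in
row the `i`-th bit of `z` and column the `i`-th bit of `w`. -/
theorem stmt_11 {ℓ q : ℕ} (hq : q = 2 ^ ℓ) (hℓ : 1 ≤ ℓ) {F : Type*} [Field F] [Fintype F]
    (hF : Fintype.card F = q ^ 2) [CharP F 2] (α γ : F) (hγ : γ ^ q = γ)
    (σ : Fin (q + 1) → F) (hinj : Function.Injective σ)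
    (hp : (X ^ (q + 1) + C (α ^ q) * X ^ q + C α * X + C γ : F[X]) = ∏ i, (X - C (σ i))) :
    ∀ z < q, ∀ w < q,
      ∑ i, σ i ^ (w * q + z)
        = ∏ i ∈ Finset.range ℓ,
            (if z / 2 ^ i % 2 = 0 then
              (if w / 2 ^ i % 2 = 0 then (1 : F) else α ^ (2 ^ i))
            else
              (if w / 2 ^ i % 2 = 0 then α ^ (q * 2 ^ i) else γ ^ (2 ^ i))) := by
  classical
  intro z hz w hw
  haveI : Fact (Nat.Prime 2) := ⟨Nat.prime_two⟩
  have hq2 : 2 ≤ q := by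
    subst hq; calc 2 = 2^1 := rfl
      _ ≤ 2^ℓ := Nat.pow_le_pow_right (by norm_num) hℓ
  have h2F : (2 : F) = 0 := by exact_mod_cast (CharP.cast_eq_zero F 2)
  have hqF : ((q : ℕ) : F) = 0 := by
    subst hq; push_cast; rw [h2F]; exact zero_pow (by omega)
  have hchar : ∀ a : F, a + a = 0 := fun a => by
    have : (2 : F) * a = 0 := by rw [h2F, zero_mul]
    linear_combination this
  have hfrob : ∀ (a b : F) (j : ℕ), (a + b)^(2^j) = a^(2^j) + b^(2^j) :=
    fun a b j => add_pow_char_pow a b 2 j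
  have hfrobq : ∀ a b : F, (a + b)^q = a^q + b^q := fun a b => by
    rw [hq]; exact add_pow_char_pow a b 2 ℓ
  have hcardpow : ∀ a : F, a^(q*q) = a := fun a => by
    rw [show q*q = q^2 by ring, ← hF]; exact FiniteField.pow_card a
  have hαqq : (α^q)^q = α := by rw [← pow_mul]; exact hcardpow α
  -- roots of p
  have hroot : ∀ i, σ i ^ (q+1) + α^q * σ i^q + α * σ i + γ = 0 := by
    intro i
    have h := congrArg (Polynomial.eval (σ i)) hp
    simp only [eval_prod, eval_add, eval_mul, eval_pow, eval_X, eval_C] at h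
    rw [h]
    exact Finset.prod_eq_zero (Finset.mem_univ i) (by simp)
  set δ : F := γ + α^(q+1) with hδdef
  have hτpow : ∀ i, (σ i + α^q)^(q+1) = δ := by
    intro i
    rw [pow_succ, hfrobq, hαqq]
    have h := hroot i
    have e : σ i ^ (q+1) = σ i ^ q * σ i := by rw [pow_succ]
    rw [e] at h
    linear_combination h - γ * h2F
  -- Rt
  have hτinj : Function.Injective (fun i : Fin (q+1) => σ i + α^q) := fun i j h =>
    hinj (by linear_combination h)
  set Rt : Finset F := Finset.univ.image (fun i => σ i + α^q) with hRtdef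
  have hRtcard : Rt.card = q+1 := by
    rw [hRtdef, Finset.card_image_of_injective _ hτinj, Finset.card_univ, Fintype.card_fin]
  have hRmem : ∀ x ∈ Rt, x^(q+1) = δ := by
    intro x hx
    rw [hRtdef, Finset.mem_image] at hx
    obtain ⟨i, _, rfl⟩ := hx
    exact hτpow i
  have hfull : ∀ x : F, x^(q+1) = δ → x ∈ Rt :=
    aux_full (by omega) δ Rt hRtcard hRmem
  have hδq : δ^q = δ := by
    rw [hδdef, hfrobq, hγ, ← pow_mul, show (q+1)*q = q*q + q by ring, pow_add,
      hcardpow, ← pow_succ']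
  -- sum lemmas
  have hsum_one : ∑ x ∈ Rt, (1:F) = 1 := by
    rw [Finset.sum_const, hRtcard, nsmul_eq_mul]
    push_cast
    rw [hqF]; ring
  have hsum_shift : ∀ m r : ℕ, ∑ x ∈ Rt, x^((q+1)*m + r) = δ^m * ∑ x ∈ Rt, x^r := by
    intro m r
    rw [Finset.mul_sum]
    refine Finset.sum_congr rfl fun x hx => ?_
    rw [pow_add, pow_mul, hRmem x hx]
  have hfrobinj : Function.Injective (fun x : F => x^q) := by
    intro a b h
    simp only at h
    have h1 : (a + b)^q = 0 := by rw [hfrobq, h, hchar]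
    have h2 : a + b = 0 := pow_eq_zero_iff (by omega) |>.1 h1
    linear_combination h2 - b * h2F
  have hsum_frob : ∀ e : ℕ, ∑ x ∈ Rt, x^(q*e) = ∑ x ∈ Rt, x^e := by
    intro e
    have himg : Rt.image (fun x => x^q) = Rt := by
      apply Finset.eq_of_subset_of_card_le
      · intro y hy
        simp only [Finset.mem_image] at hy
        obtain ⟨x, hx, rfl⟩ := hy
        refine hfull _ ?_
        rw [← pow_mul, show q*(q+1) = (q+1)*q by ring, pow_mul, hRmem x hx, hδq]
      · rw [Finset.card_image_of_injective _ hfrobinj]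
    conv_rhs => rw [← himg]
    rw [Finset.sum_image (fun x _ y _ h => hfrobinj h)]
    exact Finset.sum_congr rfl fun x _ => by rw [← pow_mul, mul_comm]
  have hkey : ∀ s t : ℕ, s < q → t < q →
      ∑ x ∈ Rt, x^(s + q*t) = if s = t then δ^s else 0 := by
    intro s t hs ht
    rcases lt_trichotomy s t with h | rfl | h
    · rw [if_neg (by omega)]
      obtain ⟨d, hd0, rfl⟩ : ∃ d, 0 < d ∧ t = s + d := ⟨t - s, by omega, by omega⟩
      rw [show s + q*(s+d) = (q+1)*s + q*d by ring, hsum_shift, hsum_frob,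
        aux_sum_zero hq2 hF δ Rt hRmem hfull hd0 (by omega), mul_zero]
    · rw [if_pos rfl, show s + q*s = (q+1)*s + 0 by ring, hsum_shift]
      simp only [pow_zero]
      rw [hsum_one, mul_one]
    · rw [if_neg (by omega)]
      obtain ⟨d, hd0, rfl⟩ : ∃ d, 0 < d ∧ s = t + d := ⟨s - t, by omega, by omega⟩
      rw [show (t+d) + q*t = (q+1)*t + d by ring, hsum_shift,
        aux_sum_zero hq2 hF δ Rt hRmem hfull hd0 (by omega), mul_zero]
  -- bit sets
  set Z : Finset ℕ := (Finset.range ℓ).filter (fun i => z / 2^i % 2 = 1) with hZdef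
  set W : Finset ℕ := (Finset.range ℓ).filter (fun i => w / 2^i % 2 = 1) with hWdef
  have hz2 : z < 2^ℓ := hq ▸ hz
  have hw2 : w < 2^ℓ := hq ▸ hw
  have hbits : ∀ u : ℕ, u < 2^ℓ →
      ∑ i ∈ (Finset.range ℓ).filter (fun i => u / 2^i % 2 = 1), 2^i = u := by
    intro u hu
    rw [Finset.sum_filter]
    conv_rhs => rw [← aux_sum_bits ℓ u hu]
    refine Finset.sum_congr rfl fun i _ => ?_
    rcases Nat.mod_two_eq_zero_or_one (u / 2^i) with h | h <;> simp [h]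
  have hzZ : ∑ i ∈ Z, 2^i = z := hbits z hz2
  have hwW : ∑ i ∈ W, 2^i = w := hbits w hw2
  set nn : Finset ℕ → ℕ := fun S => ∑ i ∈ S, 2^i with hnndef
  have hnn_ltZ : ∀ S ⊆ Z, nn S < q := fun S hS =>
    lt_of_le_of_lt (le_trans (Finset.sum_le_sum_of_subset hS) (le_of_eq hzZ)) hz
  have hnn_ltW : ∀ S ⊆ W, nn S < q := fun S hS =>
    lt_of_le_of_lt (le_trans (Finset.sum_le_sum_of_subset hS) (le_of_eq hwW)) hw
  have hnn_inj : ∀ S T : Finset ℕ, nn S = nn T → S = T := fun S T h =>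
    Finset.geomSum_injective le_rfl h
  -- rewrite LHS as a sum over Rt
  have hLHS : ∑ i, σ i ^ (w*q+z)
      = ∑ x ∈ Rt, ((∏ j ∈ Z, (x^(2^j) + α^(q*2^j))) * (∏ j ∈ W, ((x^q)^(2^j) + α^(2^j)))) := by
    rw [hRtdef, Finset.sum_image (fun i _ j _ h => hτinj h)]
    refine Finset.sum_congr rfl fun i _ => ?_
    have hx : σ i = (σ i + α^q) + α^q := by
      rw [add_assoc, hchar, add_zero]
    set x := σ i + α^q with hxdef
    have e1 : (x + α^q)^z = ∏ j ∈ Z, (x^(2^j) + α^(q*2^j)) := by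
      conv_lhs => rw [← hzZ]
      rw [← Finset.prod_pow_eq_pow_sum]
      refine Finset.prod_congr rfl fun j _ => ?_
      rw [hfrob x (α^q) j, ← pow_mul]
    have e2 : ((x + α^q)^q)^w = ∏ j ∈ W, ((x^q)^(2^j) + α^(2^j)) := by
      rw [hfrobq, hαqq]
      conv_lhs => rw [← hwW]
      rw [← Finset.prod_pow_eq_pow_sum]
      exact Finset.prod_congr rfl fun j _ => hfrob (x^q) α j
    calc σ i ^ (w*q+z) = ((x + α^q)^q)^w * (x + α^q)^z := by
          rw [← hx, pow_add, mul_comm w q, pow_mul]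
      _ = _ := by rw [e2, e1, mul_comm]
  -- expand the products
  have hexpand : ∀ x : F,
      (∏ j ∈ Z, (x^(2^j) + α^(q*2^j))) * (∏ j ∈ W, ((x^q)^(2^j) + α^(2^j)))
      = ∑ S ∈ Z.powerset, ∑ T ∈ W.powerset,
          ((∏ j ∈ Z \ S, α^(q*2^j)) * (∏ j ∈ W \ T, α^(2^j))) * x^(nn S + q * nn T) := by
    intro x
    rw [Finset.prod_add, Finset.prod_add, Finset.sum_mul_sum]
    refine Finset.sum_congr rfl fun S hS => Finset.sum_congr rfl fun T hT => ?_
    simp only [hnndef]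
    rw [Finset.prod_pow_eq_pow_sum S (fun i => 2^i) x,
      Finset.prod_pow_eq_pow_sum T (fun i => 2^i) (x^q), ← pow_mul, pow_add]
    ring
  set Cz : Finset ℕ := Z ∩ W with hCzdef
  have hpows : Z.powerset ∩ W.powerset = Cz.powerset := by
    ext S
    simp only [Finset.mem_inter, Finset.mem_powerset, Finset.subset_inter_iff, hCzdef]
  have hmain : ∑ x ∈ Rt, ((∏ j ∈ Z, (x^(2^j) + α^(q*2^j))) * (∏ j ∈ W, ((x^q)^(2^j) + α^(2^j))))
      = ∑ S ∈ Cz.powerset, ((∏ j ∈ Z \ S, α^(q*2^j)) * (∏ j ∈ W \ S, α^(2^j))) * δ^(nn S) := by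
    calc ∑ x ∈ Rt, ((∏ j ∈ Z, (x^(2^j) + α^(q*2^j))) * (∏ j ∈ W, ((x^q)^(2^j) + α^(2^j))))
        = ∑ x ∈ Rt, ∑ S ∈ Z.powerset, ∑ T ∈ W.powerset,
            ((∏ j ∈ Z \ S, α^(q*2^j)) * (∏ j ∈ W \ T, α^(2^j))) * x^(nn S + q * nn T) :=
          Finset.sum_congr rfl fun x _ => hexpand x
      _ = ∑ S ∈ Z.powerset, ∑ T ∈ W.powerset,
            ((∏ j ∈ Z \ S, α^(q*2^j)) * (∏ j ∈ W \ T, α^(2^j))) * ∑ x ∈ Rt, x^(nn S + q * nn T) := by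
          rw [Finset.sum_comm]
          refine Finset.sum_congr rfl fun S _ => ?_
          rw [Finset.sum_comm]
          exact Finset.sum_congr rfl fun T _ => (Finset.mul_sum _ _ _).symm
      _ = ∑ S ∈ Z.powerset, ∑ T ∈ W.powerset,
            (if S = T then ((∏ j ∈ Z \ S, α^(q*2^j)) * (∏ j ∈ W \ S, α^(2^j))) * δ^(nn S) else 0) := by
          refine Finset.sum_congr rfl fun S hS => Finset.sum_congr rfl fun T hT => ?_
          rw [hkey (nn S) (nn T) (hnn_ltZ S (Finset.mem_powerset.1 hS))
            (hnn_ltW T (Finset.mem_powerset.1 hT))]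
          by_cases h : S = T
          · subst h
            rw [if_pos rfl, if_pos rfl]
          · rw [if_neg (fun hc => h (hnn_inj _ _ hc)), if_neg h, mul_zero]
      _ = ∑ S ∈ Z.powerset,
            (if S ∈ W.powerset then ((∏ j ∈ Z \ S, α^(q*2^j)) * (∏ j ∈ W \ S, α^(2^j))) * δ^(nn S) else 0) :=
          Finset.sum_congr rfl fun S _ => Finset.sum_ite_eq W.powerset S _
      _ = ∑ S ∈ Z.powerset ∩ W.powerset,
            ((∏ j ∈ Z \ S, α^(q*2^j)) * (∏ j ∈ W \ S, α^(2^j))) * δ^(nn S) :=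
          Finset.sum_ite_mem _ _ _
      _ = _ := by rw [hpows]
  -- evaluate the remaining sum
  have hfinal : ∑ S ∈ Cz.powerset, ((∏ j ∈ Z \ S, α^(q*2^j)) * (∏ j ∈ W \ S, α^(2^j))) * δ^(nn S)
      = ((∏ j ∈ Z \ Cz, α^(q*2^j)) * (∏ j ∈ W \ Cz, α^(2^j))) * ∏ j ∈ Cz, γ^(2^j) := by
    have hstep : ∀ S ∈ Cz.powerset,
        ((∏ j ∈ Z \ S, α^(q*2^j)) * (∏ j ∈ W \ S, α^(2^j))) * δ^(nn S)
        = ((∏ j ∈ Z \ Cz, α^(q*2^j)) * (∏ j ∈ W \ Cz, α^(2^j))) *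
          ((∏ j ∈ S, δ^(2^j)) * ∏ j ∈ Cz \ S, (α^(q*2^j) * α^(2^j))) := by
      intro S hS
      have hSC : S ⊆ Cz := Finset.mem_powerset.1 hS
      have hCZ : Cz ⊆ Z := hCzdef ▸ Finset.inter_subset_left
      have hCW : Cz ⊆ W := hCzdef ▸ Finset.inter_subset_right
      have hZsplit : Z \ S = (Z \ Cz) ∪ (Cz \ S) := by
        ext i
        simp only [Finset.mem_sdiff, Finset.mem_union]
        have h1 : i ∈ S → i ∈ Cz := @hSC i
        have h2 : i ∈ Cz → i ∈ Z := @hCZ i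
        tauto
      have hWsplit : W \ S = (W \ Cz) ∪ (Cz \ S) := by
        ext i
        simp only [Finset.mem_sdiff, Finset.mem_union]
        have h1 : i ∈ S → i ∈ Cz := @hSC i
        have h2 : i ∈ Cz → i ∈ W := @hCW i
        tauto
      have hdZ : Disjoint (Z \ Cz) (Cz \ S) := Finset.disjoint_left.2 fun i hi hj =>
        (Finset.mem_sdiff.1 hi).2 (Finset.mem_sdiff.1 hj).1
      have hdW : Disjoint (W \ Cz) (Cz \ S) := Finset.disjoint_left.2 fun i hi hj =>
        (Finset.mem_sdiff.1 hi).2 (Finset.mem_sdiff.1 hj).1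
      have hδS : δ^(nn S) = ∏ j ∈ S, δ^(2^j) :=
        (Finset.prod_pow_eq_pow_sum S (fun i => 2^i) δ).symm
      rw [hZsplit, hWsplit, Finset.prod_union hdZ, Finset.prod_union hdW, hδS,
        Finset.prod_mul_distrib]
      ring
    rw [Finset.sum_congr rfl hstep, ← Finset.mul_sum]
    congr 1
    rw [← Finset.prod_add]
    refine Finset.prod_congr rfl fun j _ => ?_
    rw [← pow_add, show q*2^j + 2^j = (q+1)*2^j by ring, pow_mul, ← hfrob δ (α^(q+1)) j]
    congr 1
    rw [hδdef, add_assoc, hchar, add_zero]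
  -- identify the RHS
  have hprod_ite : ∀ (s : Finset ℕ) (f : ℕ → F), s ⊆ Finset.range ℓ →
      ∏ i ∈ Finset.range ℓ, (if i ∈ s then f i else 1) = ∏ i ∈ s, f i := by
    intro s f hs
    rw [← Finset.prod_filter, Finset.filter_mem_eq_inter, Finset.inter_eq_right.2 hs]
  have hRHS : ∏ i ∈ Finset.range ℓ,
        (if z / 2 ^ i % 2 = 0 then
          (if w / 2 ^ i % 2 = 0 then (1 : F) else α ^ (2 ^ i))
        else
          (if w / 2 ^ i % 2 = 0 then α ^ (q * 2 ^ i) else γ ^ (2 ^ i)))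
      = ((∏ j ∈ Z \ Cz, α^(q*2^j)) * (∏ j ∈ W \ Cz, α^(2^j))) * ∏ j ∈ Cz, γ^(2^j) := by
    have hsplit : ∀ i ∈ Finset.range ℓ,
        (if z / 2 ^ i % 2 = 0 then
          (if w / 2 ^ i % 2 = 0 then (1 : F) else α ^ (2 ^ i))
        else
          (if w / 2 ^ i % 2 = 0 then α ^ (q * 2 ^ i) else γ ^ (2 ^ i)))
        = (if i ∈ Z \ Cz then α^(q*2^i) else 1) *
          ((if i ∈ W \ Cz then α^(2^i) else 1) * (if i ∈ Cz then γ^(2^i) else 1)) := by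
      intro i hi
      have hZm : i ∈ Z ↔ ¬ (z / 2^i % 2 = 0) := by
        rw [hZdef, Finset.mem_filter]
        constructor
        · intro h; omega
        · intro h
          refine ⟨hi, ?_⟩
          rcases Nat.mod_two_eq_zero_or_one (z / 2^i) with h' | h' <;> omega
      have hWm : i ∈ W ↔ ¬ (w / 2^i % 2 = 0) := by
        rw [hWdef, Finset.mem_filter]
        constructor
        · intro h; omega
        · intro h
          refine ⟨hi, ?_⟩
          rcases Nat.mod_two_eq_zero_or_one (w / 2^i) with h' | h' <;> omega
      have hCm : i ∈ Cz ↔ (i ∈ Z ∧ i ∈ W) := by rw [hCzdef, Finset.mem_inter]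
      by_cases h1 : z / 2^i % 2 = 0 <;> by_cases h2 : w / 2^i % 2 = 0 <;>
        simp [h1, h2, Finset.mem_sdiff, hZm, hWm, hCm]
    have hZsub : Z ⊆ Finset.range ℓ := hZdef ▸ Finset.filter_subset _ _
    have hWsub : W ⊆ Finset.range ℓ := hWdef ▸ Finset.filter_subset _ _
    have hCsub : Cz ⊆ Finset.range ℓ :=
      subset_trans (hCzdef ▸ Finset.inter_subset_left) hZsub
    rw [Finset.prod_congr rfl hsplit, Finset.prod_mul_distrib, Finset.prod_mul_distrib,
      hprod_ite _ _ (subset_trans Finset.sdiff_subset hZsub),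
      hprod_ite _ _ (subset_trans Finset.sdiff_subset hWsub),
      hprod_ite _ _ hCsub, mul_assoc]
  rw [hLHS, hmain, hfinal]
  exact hRHS.symm
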